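/- arXiv:2208.14865 — 3 statements merged into one kernel-verified Lean document; each statement's English description precedes it below -/
import Mathlib

section
/- For symmetric positive definite matrices A, B with A = B + C where C is positive semi-definite, for every nonzero vector x, (xᵀAx)/(xᵀBx) ≤ det(A)/det(B). -/
open Matrix


lemma core {d : ℕ} {M : Matrix (Fin d) (Fin d) ℝ} (hM : M.PosSemidef) (y : Fin d → ℝ) :
    y ⬝ᵥ ((1 + M) *ᵥ y) ≤ (1 + M).det * (y ⬝ᵥ y) := by
  have hH := hM.1
  set U : Matrix (Fin d) (Fin d) ℝ := (hH.eigenvectorUnitary : Matrix (Fin d) (Fin d) ℝ) with hU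
  have hUU : U * star U = 1 := (Matrix.mem_unitaryGroup_iff).mp hH.eigenvectorUnitary.2
  have hUU' : star U * U = 1 := (Matrix.mem_unitaryGroup_iff').mp hH.eigenvectorUnitary.2
  have hstar : star U = Uᵀ := by
    rw [Matrix.star_eq_conjTranspose, conjTranspose]
    ext i j; simp
  set g : Fin d → ℝ := fun i => 1 + hH.eigenvalues i with hg
  have hspec : M = U * diagonal hH.eigenvalues * star U := by
    simpa using hH.spectral_theorem
  have hsum : 1 + M = U * diagonal g * star U := by
    have : diagonal g = 1 + diagonal hH.eigenvalues := by
      rw [hg, ← diagonal_one, ← diagonal_add]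
    rw [this, mul_add, add_mul, ← hspec, mul_one, hUU]
  have hdet : (1 + M).det = ∏ i, g i := by
    rw [hsum, det_mul_right_comm, hUU, one_mul, det_diagonal]
  set z : Fin d → ℝ := (star U) *ᵥ y with hz
  have key : ∀ N : Matrix (Fin d) (Fin d) ℝ, z ⬝ᵥ (N *ᵥ z) = y ⬝ᵥ ((U * N * star U) *ᵥ y) := by
    intro N
    calc z ⬝ᵥ (N *ᵥ z) = (y ᵥ* U) ⬝ᵥ ((N * Uᵀ) *ᵥ y) := by
          rw [hz, mulVec_mulVec, hstar, mulVec_transpose]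
      _ = y ⬝ᵥ (U *ᵥ ((N * Uᵀ) *ᵥ y)) := (dotProduct_mulVec y U _).symm
      _ = y ⬝ᵥ ((U * N * star U) *ᵥ y) := by rw [mulVec_mulVec, mul_assoc, hstar]
  have hyy : y ⬝ᵥ y = z ⬝ᵥ z := by
    have h := key 1
    rw [mul_one, hUU] at h
    simpa using h.symm
  have hyMy : y ⬝ᵥ ((1 + M) *ᵥ y) = z ⬝ᵥ (diagonal g *ᵥ z) := by
    rw [key (diagonal g), ← hsum]
  rw [hyMy, hyy, hdet]
  have hg1 : ∀ j, (1:ℝ) ≤ g j := fun j => le_add_of_nonneg_right (hM.eigenvalues_nonneg j)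
  simp only [dotProduct, mulVec_diagonal, Finset.mul_sum]
  apply Finset.sum_le_sum
  intro i _
  have h1 : g i ≤ ∏ j, g j := by
    rw [← Finset.mul_prod_erase _ _ (Finset.mem_univ i)]
    refine le_mul_of_one_le_right (le_trans zero_le_one (hg1 i)) ?_
    calc (1:ℝ) = ∏ _j ∈ Finset.univ.erase i, (1:ℝ) := (Finset.prod_const_one).symm
      _ ≤ ∏ j ∈ Finset.univ.erase i, g j :=
          Finset.prod_le_prod (fun _ _ => zero_le_one) (fun j _ => hg1 j)
  have h2 : (0:ℝ) ≤ z i * z i := mul_self_nonneg _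
  calc z i * (g i * z i) = g i * (z i * z i) := by ring
    _ ≤ (∏ j, g j) * (z i * z i) := by apply mul_le_mul_of_nonneg_right h1 h2

/-- For symmetric positive definite matrices `A`, `B` with `A = B + C` where `C` is
positive semi-definite, for every nonzero vector `x`,
`(xᵀAx)/(xᵀBx) ≤ det(A)/det(B)`. -/
theorem stmt0 {d : ℕ} (A B C : Matrix (Fin d) (Fin d) ℝ)
    (hA : A.PosDef) (hB : B.PosDef) (hC : C.PosSemidef) (hABC : A = B + C)
    (x : Fin d → ℝ) (hx : x ≠ 0) :
    (x ⬝ᵥ A.mulVec x) / (x ⬝ᵥ B.mulVec x) ≤ A.det / B.det := by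
  have hBdet : 0 < B.det := hB.det_pos
  have hxB : 0 < x ⬝ᵥ B.mulVec x := by
    have := hB.dotProduct_mulVec_pos hx
    simpa using this
  have hBunit : IsUnit B.det := hBdet.ne'.isUnit
  have hBinvdet : B⁻¹.det = (B.det)⁻¹ := by
    rw [det_nonsing_inv, Ring.inverse_eq_inv']
  obtain ⟨W, hWps, hWW, hWsym⟩ :
      ∃ W : Matrix (Fin d) (Fin d) ℝ, W.PosSemidef ∧ W * W = B⁻¹ ∧ Wᵀ = W := by
    have hBinv : (B⁻¹).PosDef := hB.inv
    open scoped MatrixOrder in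
    refine ⟨CFC.sqrt B⁻¹, (CFC.sqrt_nonneg _).posSemidef,
      CFC.sqrt_mul_sqrt_self _ hBinv.posSemidef.nonneg, ?_⟩
    open scoped MatrixOrder in
    have h := (CFC.sqrt_nonneg B⁻¹).posSemidef.1
    rwa [IsHermitian, conjTranspose_eq_transpose_of_trivial] at h
  have hWdet : W.det ≠ 0 := by
    intro h
    have : B⁻¹.det = 0 := by rw [← hWW, det_mul, h, mul_zero]
    rw [hBinvdet] at this
    exact inv_ne_zero hBdet.ne' this
  have hcomm : W * B = B * W := by
    have h1 : W * B⁻¹ = B⁻¹ * W := by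
      rw [← hWW, ← mul_assoc, mul_assoc]
    calc W * B = B * B⁻¹ * W * B := by rw [mul_nonsing_inv _ hBunit, one_mul]
      _ = B * (W * B⁻¹) * B := by rw [mul_assoc B B⁻¹ W, ← h1]
      _ = B * W * (B⁻¹ * B) := by rw [mul_assoc, mul_assoc, mul_assoc]
      _ = B * W := by rw [nonsing_inv_mul _ hBunit, mul_one]
  have hWBW : W * B * W = 1 := by
    rw [hcomm, mul_assoc, hWW, mul_nonsing_inv _ hBunit]
  have hMps : (W * C * W).PosSemidef := by
    have h := hC.mul_mul_conjTranspose_same W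
    rwa [conjTranspose_eq_transpose_of_trivial, hWsym] at h
  set M := W * C * W with hMdef
  obtain ⟨y, hxy⟩ : ∃ y : Fin d → ℝ, W *ᵥ y = x :=
    ⟨W⁻¹ *ᵥ x, by rw [mulVec_mulVec, mul_nonsing_inv _ hWdet.isUnit, one_mulVec]⟩
  have key : ∀ N : Matrix (Fin d) (Fin d) ℝ,
      x ⬝ᵥ N.mulVec x = y ⬝ᵥ ((W * N * W) *ᵥ y) := by
    intro N
    rw [← hxy]
    calc (W *ᵥ y) ⬝ᵥ N *ᵥ (W *ᵥ y)
        = (y ᵥ* W) ⬝ᵥ ((N * W) *ᵥ y) := by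
          rw [mulVec_mulVec]
          congr 1
          calc W *ᵥ y = Wᵀ *ᵥ y := by rw [hWsym]
            _ = y ᵥ* W := mulVec_transpose W y
      _ = y ⬝ᵥ (W *ᵥ ((N * W) *ᵥ y)) := (dotProduct_mulVec y W _).symm
      _ = y ⬝ᵥ ((W * N * W) *ᵥ y) := by rw [mulVec_mulVec, mul_assoc]
  have hxBx : x ⬝ᵥ B.mulVec x = y ⬝ᵥ y := by
    rw [key B, hWBW, one_mulVec]
  have h1M : 1 + M = W * A * W := by
    rw [hABC, mul_add, add_mul, hWBW, hMdef]
  have hxAx : x ⬝ᵥ A.mulVec x = y ⬝ᵥ ((1 + M) *ᵥ y) := by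
    rw [key A, h1M]
  have hdetA : A.det = B.det * (1 + M).det := by
    have hW2 : W.det * W.det = (B.det)⁻¹ := by
      rw [← det_mul, hWW, hBinvdet]
    rw [h1M, det_mul, det_mul, mul_right_comm, hW2, ← mul_assoc,
      mul_inv_cancel₀ hBdet.ne', one_mul]
  rw [div_le_div_iff₀ hxB hBdet, hxAx, hxBx, hdetA]
  have hcore := core hMps y
  calc (y ⬝ᵥ ((1 + M) *ᵥ y)) * B.det
      ≤ (1 + M).det * (y ⬝ᵥ y) * B.det :=
        mul_le_mul_of_nonneg_right hcore hBdet.le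
    _ = B.det * (1 + M).det * (y ⬝ᵥ y) := by ring
end

section
/- Let S_g, S_1, ..., S_{L'} be positive definite d×d matrices and ΔS_1, ..., ΔS_{L'} positive semi-definite d×d matrices such that S_k ≼ S_g for all k, S_g ≼ V where V = S_g + Σ_k ΔS_k, and suppose det(S_g)/det(S_1) ≤ D and det(S_k + ΔS_k)/det(S_k) ≤ U for all k. Then for every nonzero vector θ, (θᵀVθ)/(θᵀS_1θ) ≤ D + (U − 1) + (L' − 1)·D·(U − 1). -/
open Matrix

open scoped MatrixOrder in
lemma quad_key {d : ℕ} {A B : Matrix (Fin d) (Fin d) ℝ} (hA : A.PosDef) (hB : B.PosSemidef)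
    {u : ℝ} (hdet : (A + B).det ≤ u * A.det) (x : Fin d → ℝ) :
    x ⬝ᵥ B.mulVec x ≤ (u - 1) * (x ⬝ᵥ A.mulVec x) := by
  classical
  set R := CFC.sqrt A with hR
  have hRpsd : R.PosSemidef := (CFC.sqrt_nonneg A).posSemidef
  have hRH : Rᴴ = R := hRpsd.isHermitian
  have hRR : R * R = A := CFC.sqrt_mul_sqrt_self A hA.posSemidef.nonneg
  have hdetA : 0 < A.det := hA.det_pos
  have hdetR : R.det ≠ 0 := by
    intro h
    have : A.det = R.det * R.det := by rw [← hRR, det_mul]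
    rw [h, mul_zero] at this
    exact hdetA.ne' this
  have hRunit : IsUnit R.det := isUnit_iff_ne_zero.mpr hdetR
  have hRiR : R⁻¹ * R = 1 := nonsing_inv_mul R hRunit
  have hRRi : R * R⁻¹ = 1 := mul_nonsing_inv R hRunit
  have hRiH : (R⁻¹)ᴴ = R⁻¹ := by rw [conjTranspose_nonsing_inv, hRH]
  set M := R⁻¹ * B * R⁻¹ with hM
  have hMpsd : M.PosSemidef := by
    have := hB.conjTranspose_mul_mul_same (R⁻¹)
    rwa [hRiH] at this
  have hconj : R⁻¹ * (A + B) * R⁻¹ = 1 + M := by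
    rw [hM, Matrix.mul_add, Matrix.add_mul, ← hRR]
    congr 1
    rw [← Matrix.mul_assoc, Matrix.mul_assoc (R⁻¹ * R), hRiR, one_mul, hRRi]
  have hdet1M : (1 + M).det ≤ u := by
    have h1 : (1 + M).det = R⁻¹.det * (A + B).det * R⁻¹.det := by
      rw [← hconj, det_mul, det_mul]
    have hAdet : A.det = R.det * R.det := by rw [← hRR, det_mul]
    have h2 : R⁻¹.det * A.det * R⁻¹.det = 1 := by
      rw [det_nonsing_inv, Ring.inverse_eq_inv, hAdet]
      field_simp
    have h3 : 0 ≤ R⁻¹.det * R⁻¹.det := mul_self_nonneg _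
    calc (1 + M).det = R⁻¹.det * R⁻¹.det * (A + B).det := by rw [h1]; ring
      _ ≤ R⁻¹.det * R⁻¹.det * (u * A.det) := mul_le_mul_of_nonneg_left hdet h3
      _ = u * (R⁻¹.det * A.det * R⁻¹.det) := by ring
      _ = u := by rw [h2, mul_one]
  have hMH := hMpsd.isHermitian
  set μ := hMH.eigenvalues with hμ
  set Un : Matrix (Fin d) (Fin d) ℝ := (hMH.eigenvectorUnitary : Matrix (Fin d) (Fin d) ℝ) with hUn
  have hcoe : (RCLike.ofReal ∘ μ : Fin d → ℝ) = μ := by funext i; simp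
  have hspec : M = Un * diagonal μ * star Un := by
    have := hMH.spectral_theorem
    rwa [hcoe] at this
  have hUnUn : Un * star Un = 1 := (Matrix.mem_unitaryGroup_iff).mp hMH.eigenvectorUnitary.2
  have hdiag1M : 1 + M = Un * diagonal (fun i => 1 + μ i) * star Un := by
    conv_lhs => rw [hspec, show (1 : Matrix (Fin d) (Fin d) ℝ) = Un * 1 * star Un by
      rw [Matrix.mul_one, hUnUn]]
    rw [← Matrix.add_mul, ← Matrix.mul_add, ← diagonal_one, diagonal_add]
  have hdetprod : (1 + M).det = ∏ i, (1 + μ i) := by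
    rw [hdiag1M, Matrix.det_mul_right_comm, hUnUn, one_mul, det_diagonal]
  have hμnonneg : ∀ i, 0 ≤ μ i := hMpsd.eigenvalues_nonneg
  have hμle : ∀ i, μ i ≤ u - 1 := by
    intro i
    have h1 : 1 + μ i ≤ ∏ j, (1 + μ j) := by
      have hp := Finset.prod_le_prod (s := Finset.univ)
        (f := fun j => if j = i then 1 + μ i else 1) (g := fun j => 1 + μ j)
        (fun j _ => by split <;> [linarith [hμnonneg i]; norm_num])
        (fun j _ => by
          split_ifs with h
          · rw [h]
          · linarith [hμnonneg j])
      have hps : ∏ j, (if j = i then 1 + μ i else 1) = 1 + μ i := by simp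
      simpa [hps] using hp
    have h2 : ∏ j, (1 + μ j) ≤ u := hdetprod ▸ hdet1M
    linarith
  -- (u-1) • 1 - M is PSD
  have hpsdM : ((u - 1) • (1 : Matrix (Fin d) (Fin d) ℝ) - M).PosSemidef := by
    have heq2 : diagonal (fun i => u - 1 - μ i)
        = (u - 1) • (1 : Matrix (Fin d) (Fin d) ℝ) - diagonal μ := by
      ext i j
      rcases eq_or_ne i j with h | h
      · subst h; simp [Matrix.one_apply]
      · simp [diagonal_apply_ne _ h, Matrix.one_apply_ne h]
    have heq : (u - 1) • (1 : Matrix (Fin d) (Fin d) ℝ) - M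
        = Un * diagonal (fun i => u - 1 - μ i) * star Un := by
      rw [heq2, Matrix.mul_sub, Matrix.sub_mul]
      conv_lhs => rw [hspec]
      congr 1
      rw [Matrix.mul_smul, Matrix.smul_mul, Matrix.mul_one, hUnUn]
    rw [heq, ← Matrix.star_eq_conjTranspose] at *
    exact (Matrix.PosSemidef.diagonal (fun i => by simpa using sub_nonneg.mpr (by linarith [hμle i] : μ i ≤ u - 1))).mul_mul_conjTranspose_same Un
  -- conjugate back
  have hpsd : ((u - 1) • A - B).PosSemidef := by
    have heq : (u - 1) • A - B = R * ((u - 1) • (1 : Matrix (Fin d) (Fin d) ℝ) - M) * R := by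
      rw [Matrix.mul_sub, Matrix.sub_mul, Matrix.mul_smul, Matrix.smul_mul,
        Matrix.mul_one, hRR]
      congr 1
      rw [hM, ← Matrix.mul_assoc, ← Matrix.mul_assoc, hRRi, one_mul, Matrix.mul_assoc, hRiR,
        Matrix.mul_one]
    rw [heq]
    have := hpsdM.conjTranspose_mul_mul_same R
    rwa [hRH] at this
  have h0 := hpsd.dotProduct_mulVec_nonneg x
  rw [star_trivial] at h0
  rw [sub_mulVec, smul_mulVec, dotProduct_sub, dotProduct_smul, smul_eq_mul] at h0
  linarith

/-- Deviation bound between the fully synchronized Gram matrix `V` and a delayed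
local copy `S 0` in the federated bandit communication protocol. -/
theorem stmt1 {d L' : ℕ} (hL : 0 < L') (U D : ℝ) (hU : 1 ≤ U) (hD : 1 ≤ D)
    (Sg V : Matrix (Fin d) (Fin d) ℝ) (S ΔS : Fin L' → Matrix (Fin d) (Fin d) ℝ)
    (hSg : Sg.PosDef) (hS : ∀ k, (S k).PosDef) (hΔS : ∀ k, (ΔS k).PosSemidef)
    (hle : ∀ k, (Sg - S k).PosSemidef)
    (hV : V = Sg + ∑ k, ΔS k)
    (hgV : (V - Sg).PosSemidef)
    (hdetD : Sg.det / (S ⟨0, hL⟩).det ≤ D)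
    (hdetU : ∀ k, (S k + ΔS k).det / (S k).det ≤ U)
    (θ : Fin d → ℝ) (hθ : θ ≠ 0) :
    (θ ⬝ᵥ V.mulVec θ) / (θ ⬝ᵥ (S ⟨0, hL⟩).mulVec θ) ≤
      D + (U - 1) + ((L' : ℝ) - 1) * D * (U - 1) := by
  classical
  set k0 : Fin L' := ⟨0, hL⟩ with hk0
  set c : ℝ := θ ⬝ᵥ (S k0).mulVec θ with hc
  have hcpos : 0 < c := by
    have := (hS k0).dotProduct_mulVec_pos hθ
    rwa [star_trivial] at this
  -- θᵀ Sg θ ≤ D * c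
  have hSg0 : θ ⬝ᵥ Sg.mulVec θ ≤ D * c := by
    have hdet0 : 0 < (S k0).det := (hS k0).det_pos
    have hdet' : (S k0 + (Sg - S k0)).det ≤ D * (S k0).det := by
      rw [add_sub_cancel]
      rw [div_le_iff₀ hdet0] at hdetD
      exact hdetD
    have h := quad_key (hS k0) (hle k0) hdet' θ
    rw [sub_mulVec, dotProduct_sub] at h
    linarith
  -- each ΔS k bound
  have hΔk : ∀ k, θ ⬝ᵥ (ΔS k).mulVec θ ≤ (U - 1) * (θ ⬝ᵥ (S k).mulVec θ) := by
    intro k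
    have hdet' : (S k + ΔS k).det ≤ U * (S k).det := by
      have h := hdetU k
      rw [div_le_iff₀ (hS k).det_pos] at h
      exact h
    exact quad_key (hS k) (hΔS k) hdet' θ
  -- S k ≤ Sg in quadratic form
  have hSkSg : ∀ k, θ ⬝ᵥ (S k).mulVec θ ≤ θ ⬝ᵥ Sg.mulVec θ := by
    intro k
    have h := (hle k).dotProduct_mulVec_nonneg θ
    rw [star_trivial, sub_mulVec, dotProduct_sub] at h
    linarith
  have hU1 : (0:ℝ) ≤ U - 1 := by linarith
  have hΔbound : ∀ k, θ ⬝ᵥ (ΔS k).mulVec θ ≤ (U - 1) * (D * c) := fun k =>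
    le_trans (hΔk k) (mul_le_mul_of_nonneg_left ((hSkSg k).trans hSg0) hU1)
  have hΔ0 : θ ⬝ᵥ (ΔS k0).mulVec θ ≤ (U - 1) * c :=
    le_trans (hΔk k0) (le_of_eq rfl)
  -- expand V
  have hsum : ∀ (s : Finset (Fin L')), θ ⬝ᵥ (∑ k ∈ s, ΔS k).mulVec θ
      = ∑ k ∈ s, θ ⬝ᵥ (ΔS k).mulVec θ := by
    intro s
    induction s using Finset.induction with
    | empty => simp
    | insert _ _ hni ih =>
      rw [Finset.sum_insert hni, Finset.sum_insert hni, add_mulVec, dotProduct_add, ih]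
  have hVexp : θ ⬝ᵥ V.mulVec θ = θ ⬝ᵥ Sg.mulVec θ + ∑ k, θ ⬝ᵥ (ΔS k).mulVec θ := by
    rw [hV, add_mulVec, dotProduct_add, hsum]
  -- bound the sum
  have hsumbound : ∑ k, θ ⬝ᵥ (ΔS k).mulVec θ
      ≤ (U - 1) * c + ((L' : ℝ) - 1) * ((U - 1) * (D * c)) := by
    rw [← Finset.add_sum_erase _ _ (Finset.mem_univ k0)]
    have h1 : ∑ k ∈ Finset.univ.erase k0, θ ⬝ᵥ (ΔS k).mulVec θ
        ≤ (Finset.univ.erase k0).card • ((U - 1) * (D * c)) :=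
      Finset.sum_le_card_nsmul _ _ _ (fun k _ => hΔbound k)
    have hcard : ((Finset.univ.erase k0).card : ℝ) = (L' : ℝ) - 1 := by
      rw [Finset.card_erase_of_mem (Finset.mem_univ k0), Finset.card_univ, Fintype.card_fin]
      rw [Nat.cast_sub hL]
      norm_num
    rw [nsmul_eq_mul, hcard] at h1
    linarith [hΔ0]
  have hfinal : θ ⬝ᵥ V.mulVec θ
      ≤ (D + (U - 1) + ((L' : ℝ) - 1) * D * (U - 1)) * c := by
    rw [hVexp]
    have := hsumbound
    nlinarith [hSg0]
  rw [div_le_iff₀ hcpos]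
  exact hfinal
end

section
/- Suppose H₁, ..., H_{L'} are symmetric positive definite d×d matrices with ρ_min·I ≼ H_k ≼ ρ_max·I for all k, and h₁, ..., h_{L'} ∈ ℝ^d satisfy ‖h_k‖_{H_k⁻¹} ≤ κ. Let H = Σ_k H_k and h = Σ_k h_k. Then ‖h‖_{H⁻¹} ≤ √(L')·κ and for any θ with ‖θ‖ ≤ 1, ‖Hθ‖_{H⁻¹} ≤ √(L'·ρ_max). -/
open Matrix

lemma sum_mulVec' {d : ℕ} {ι : Type*} (s : Finset ι) (A : ι → Matrix (Fin d) (Fin d) ℝ) (x : Fin d → ℝ) :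
    (∑ i ∈ s, A i) *ᵥ x = ∑ i ∈ s, (A i) *ᵥ x := by
  induction s using Finset.cons_induction with
  | empty => simp
  | cons a s ha ih => simp [Matrix.add_mulVec, ih]

lemma dotProduct_sum' {d : ℕ} {ι : Type*} (s : Finset ι) (v : Fin d → ℝ) (w : ι → (Fin d → ℝ)) :
    v ⬝ᵥ (∑ i ∈ s, w i) = ∑ i ∈ s, v ⬝ᵥ w i := by
  induction s using Finset.cons_induction with
  | empty => simp
  | cons a s ha ih => simp [dotProduct_add, ih]

lemma sum_dotProduct' {d : ℕ} {ι : Type*} (s : Finset ι) (w : ι → (Fin d → ℝ)) (v : Fin d → ℝ) :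
    (∑ i ∈ s, w i) ⬝ᵥ v = ∑ i ∈ s, w i ⬝ᵥ v := by
  induction s using Finset.cons_induction with
  | empty => simp
  | cons a s ha ih => simp [add_dotProduct, ih]

lemma qf_nonneg {d : ℕ} {M : Matrix (Fin d) (Fin d) ℝ} (hM : M.PosSemidef) (x : Fin d → ℝ) :
    0 ≤ x ⬝ᵥ M *ᵥ x := by
  have := hM.dotProduct_mulVec_nonneg x; simpa using this

lemma qf_symm {d : ℕ} {M : Matrix (Fin d) (Fin d) ℝ} (hM : M.IsHermitian) (x y : Fin d → ℝ) :
    y ⬝ᵥ M *ᵥ x = x ⬝ᵥ M *ᵥ y := by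
  have hMt : Mᵀ = M := by
    have := hM; rwa [Matrix.IsHermitian, Matrix.conjTranspose_eq_transpose_of_trivial] at this
  calc y ⬝ᵥ M *ᵥ x = (M *ᵥ x) ⬝ᵥ y := dotProduct_comm _ _
    _ = (Mᵀᵀ *ᵥ x) ⬝ᵥ y := by rw [Matrix.transpose_transpose]
    _ = (x ᵥ* Mᵀ) ⬝ᵥ y := by rw [Matrix.mulVec_transpose]
    _ = x ⬝ᵥ Mᵀ *ᵥ y := (Matrix.dotProduct_mulVec _ _ _).symm
    _ = x ⬝ᵥ M *ᵥ y := by rw [hMt]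

lemma qf_cs {d : ℕ} {M : Matrix (Fin d) (Fin d) ℝ} (hM : M.PosSemidef) (x y : Fin d → ℝ) :
    (x ⬝ᵥ M *ᵥ y)^2 ≤ (x ⬝ᵥ M *ᵥ x) * (y ⬝ᵥ M *ᵥ y) := by
  have hs := qf_symm hM.isHermitian x y
  have key : ∀ t : ℝ, 0 ≤ (y ⬝ᵥ M *ᵥ y) * (t*t) + (2*(x ⬝ᵥ M *ᵥ y)) * t + (x ⬝ᵥ M *ᵥ x) := by
    intro t
    have h0 : 0 ≤ (x + t • y) ⬝ᵥ M *ᵥ (x + t • y) := qf_nonneg hM _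
    rw [Matrix.mulVec_add, Matrix.mulVec_smul] at h0
    simp only [dotProduct_add, add_dotProduct, dotProduct_smul,
      smul_dotProduct, smul_eq_mul] at h0
    rw [hs] at h0
    nlinarith [h0]
  have hd := discrim_le_zero key
  rw [discrim] at hd
  nlinarith [hd]

/-- Noise-aggregation bounds for summed privatizer perturbations. -/
theorem stmt10 {d L' : ℕ} (hL : 0 < L') (ρmin ρmax κ : ℝ)
    (hρmin : 0 < ρmin) (hρ : ρmin ≤ ρmax) (hκ : 0 ≤ κ)
    (H : Fin L' → Matrix (Fin d) (Fin d) ℝ) (h : Fin L' → (Fin d → ℝ))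
    (hHpd : ∀ k, (H k).PosDef)
    (hlo : ∀ k, ((H k) - ρmin • (1 : Matrix (Fin d) (Fin d) ℝ)).PosSemidef)
    (hhi : ∀ k, (ρmax • (1 : Matrix (Fin d) (Fin d) ℝ) - H k).PosSemidef)
    (hh : ∀ k, Real.sqrt (h k ⬝ᵥ (H k)⁻¹.mulVec (h k)) ≤ κ) :
    Real.sqrt ((∑ k, h k) ⬝ᵥ (∑ k, H k)⁻¹.mulVec (∑ k, h k)) ≤ Real.sqrt L' * κ ∧
    ∀ θ : Fin d → ℝ, Real.sqrt (θ ⬝ᵥ θ) ≤ 1 →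
      Real.sqrt ((∑ k, H k).mulVec θ ⬝ᵥ (∑ k, H k)⁻¹.mulVec ((∑ k, H k).mulVec θ)) ≤
        Real.sqrt ((L' : ℝ) * ρmax) := by
  have hρmax : 0 < ρmax := lt_of_lt_of_le hρmin hρ
  set Hs : Matrix (Fin d) (Fin d) ℝ := ∑ k, H k with hHs
  set x : Fin d → ℝ := ∑ k, h k with hx
  -- Hs is symmetric
  have hHsHerm : Hs.IsHermitian := by
    rw [Matrix.IsHermitian, hHs, Matrix.conjTranspose_sum]
    exact Finset.sum_congr rfl fun k _ => (hHpd k).1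
  -- Hs has invertible determinant
  have hdet : IsUnit Hs.det := by
    have hne : Nonempty (Fin L') := ⟨⟨0, hL⟩⟩
    have hpd : Hs.PosDef := by
      refine Matrix.PosDef.of_dotProduct_mulVec_pos hHsHerm fun v hv => ?_
      have e : star v ⬝ᵥ Hs *ᵥ v = ∑ k, star v ⬝ᵥ (H k) *ᵥ v := by
        rw [hHs, sum_mulVec', dotProduct_sum']
      rw [e]
      exact Finset.sum_pos (fun k _ => (hHpd k).dotProduct_mulVec_pos hv) Finset.univ_nonempty
    exact isUnit_iff_ne_zero.mpr hpd.det_pos.ne'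
  have hmulinv : ∀ v : Fin d → ℝ, Hs *ᵥ (Hs⁻¹ *ᵥ v) = v := by
    intro v
    rw [Matrix.mulVec_mulVec, Matrix.mul_nonsing_inv _ hdet, Matrix.one_mulVec]
  have hinvmul : ∀ v : Fin d → ℝ, Hs⁻¹ *ᵥ (Hs *ᵥ v) = v := by
    intro v
    rw [Matrix.mulVec_mulVec, Matrix.nonsing_inv_mul _ hdet, Matrix.one_mulVec]
  constructor
  · -- first bound
    set z : Fin d → ℝ := Hs⁻¹ *ᵥ x with hz
    have hxHz : Hs *ᵥ z = x := hmulinv x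
    set A : ℝ := x ⬝ᵥ Hs⁻¹ *ᵥ x with hA
    have hAzx : A = z ⬝ᵥ x := by rw [hA, ← hz, dotProduct_comm]
    set a : Fin L' → ℝ := fun k => z ⬝ᵥ (H k) *ᵥ z with ha
    set b : Fin L' → ℝ := fun k => h k ⬝ᵥ (H k)⁻¹ *ᵥ h k with hb
    have hb0 : ∀ k, 0 ≤ b k := fun k => qf_nonneg ((hHpd k).inv.posSemidef) _
    have ha0 : ∀ k, 0 ≤ a k := fun k => qf_nonneg (hHpd k).posSemidef _
    have hbκ : ∀ k, b k ≤ κ^2 := by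
      intro k
      have := hh k
      nlinarith [Real.sq_sqrt (hb0 k), Real.sqrt_nonneg (b k), this]
    have hsuma : ∑ k, a k = A := by
      rw [hAzx, ← hxHz, hHs, sum_mulVec', dotProduct_sum']
    have hstep : ∀ k, z ⬝ᵥ h k ≤ Real.sqrt (a k) * Real.sqrt (b k) := by
      intro k
      set w : Fin d → ℝ := (H k)⁻¹ *ᵥ h k with hw
      have hdetk : IsUnit (H k).det := isUnit_iff_ne_zero.mpr (hHpd k).det_pos.ne'
      have hhw : (H k) *ᵥ w = h k := by
        rw [hw, Matrix.mulVec_mulVec, Matrix.mul_nonsing_inv _ hdetk, Matrix.one_mulVec]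
      have hcs := qf_cs (hHpd k).posSemidef z w
      rw [hhw] at hcs
      have hwb : w ⬝ᵥ h k = b k := by
        rw [dotProduct_comm]
      rw [hwb] at hcs
      calc z ⬝ᵥ h k ≤ |z ⬝ᵥ h k| := le_abs_self _
        _ = Real.sqrt ((z ⬝ᵥ h k)^2) := (Real.sqrt_sq_eq_abs _).symm
        _ ≤ Real.sqrt (a k * b k) := Real.sqrt_le_sqrt hcs
        _ = Real.sqrt (a k) * Real.sqrt (b k) := Real.sqrt_mul (ha0 k) _
    have hA0 : 0 ≤ A := by
      rw [← hsuma]; exact Finset.sum_nonneg fun k _ => ha0 k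
    have hAle : A ≤ Real.sqrt A * (Real.sqrt L' * κ) := by
      have h1 : A ≤ ∑ k, Real.sqrt (a k) * Real.sqrt (b k) := by
        rw [hAzx, hx, dotProduct_sum']
        exact Finset.sum_le_sum fun k _ => hstep k
      have h2 : (∑ k, Real.sqrt (a k) * Real.sqrt (b k))^2 ≤ (∑ k, a k) * (∑ k, b k) := by
        have := Finset.sum_mul_sq_le_sq_mul_sq Finset.univ (fun k => Real.sqrt (a k))
          (fun k => Real.sqrt (b k))
        simpa [Real.sq_sqrt (ha0 _), Real.sq_sqrt (hb0 _)] using this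
      have h3 : (∑ k, b k) ≤ L' * κ^2 := by
        calc (∑ k, b k) ≤ ∑ _k : Fin L', κ^2 := Finset.sum_le_sum fun k _ => hbκ k
          _ = L' * κ^2 := by simp [mul_comm]
      have hsum_nonneg : 0 ≤ ∑ k, Real.sqrt (a k) * Real.sqrt (b k) :=
        Finset.sum_nonneg fun k _ => mul_nonneg (Real.sqrt_nonneg _) (Real.sqrt_nonneg _)
      have h4 : (∑ k, Real.sqrt (a k) * Real.sqrt (b k)) ≤ Real.sqrt A * (Real.sqrt L' * κ) := by
        calc (∑ k, Real.sqrt (a k) * Real.sqrt (b k))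
            = Real.sqrt ((∑ k, Real.sqrt (a k) * Real.sqrt (b k))^2) :=
              (Real.sqrt_sq hsum_nonneg).symm
          _ ≤ Real.sqrt ((∑ k, a k) * (∑ k, b k)) := Real.sqrt_le_sqrt h2
          _ ≤ Real.sqrt (A * (L' * κ^2)) := by
              apply Real.sqrt_le_sqrt
              rw [hsuma]
              exact mul_le_mul_of_nonneg_left h3 hA0
          _ = Real.sqrt A * (Real.sqrt L' * κ) := by
              rw [Real.sqrt_mul hA0, Real.sqrt_mul (by positivity : (0:ℝ) ≤ (L':ℝ)),
                Real.sqrt_sq hκ]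
      linarith [h1, h4]
    -- conclude √A ≤ √L' * κ
    rcases eq_or_lt_of_le hA0 with hA0' | hA0'
    · rw [← hA0']
      simp [mul_nonneg (Real.sqrt_nonneg _) hκ]
    · have hsA : 0 < Real.sqrt A := Real.sqrt_pos.mpr hA0'
      have : Real.sqrt A * Real.sqrt A ≤ Real.sqrt A * (Real.sqrt L' * κ) := by
        rw [Real.mul_self_sqrt hA0]; exact hAle
      have := le_of_mul_le_mul_left this hsA
      exact this
  · -- second bound
    intro θ hθ
    have hθ2 : θ ⬝ᵥ θ ≤ 1 := by
      have h0 : 0 ≤ θ ⬝ᵥ θ := by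
        simp only [dotProduct]
        exact Finset.sum_nonneg fun i _ => mul_self_nonneg _
      nlinarith [Real.sq_sqrt h0, Real.sqrt_nonneg (θ ⬝ᵥ θ)]
    rw [show (∑ k, H k)⁻¹.mulVec ((∑ k, H k).mulVec θ) = θ from hinvmul θ]
    have key : Hs *ᵥ θ ⬝ᵥ θ ≤ L' * ρmax := by
      have e : Hs *ᵥ θ ⬝ᵥ θ = ∑ k, θ ⬝ᵥ (H k) *ᵥ θ := by
        rw [dotProduct_comm, hHs, sum_mulVec', dotProduct_sum']
      rw [e]
      have hbound : ∀ k, θ ⬝ᵥ (H k) *ᵥ θ ≤ ρmax := by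
        intro k
        have h0 := qf_nonneg (hhi k) θ
        rw [Matrix.sub_mulVec, dotProduct_sub, Matrix.smul_mulVec,
          Matrix.one_mulVec, dotProduct_smul, smul_eq_mul] at h0
        nlinarith [hθ2, hρmax.le]
      calc (∑ k, θ ⬝ᵥ (H k) *ᵥ θ) ≤ ∑ _k : Fin L', ρmax :=
            Finset.sum_le_sum fun k _ => hbound k
        _ = L' * ρmax := by simp [mul_comm]
    exact Real.sqrt_le_sqrt key
end
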